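/- arXiv:2604.16737 — 2 statements merged into one kernel-verified Lean document; each statement's English description precedes it below -/
import Mathlib

section
/- If μ is a Möbius transformation preserving the unit circle, then all welding Grunsky coefficients λ̂_{k,ℓ} of μ with |k| ≥ 1 and |ℓ| ≥ 1 vanish; that is, the Grunsky matrix Λ_μ is zero. -/
open MeasureTheory

private lemma exp_int_integral_zero (k : ℤ) (hk : k ≠ 0) :
    ∫ s in Set.Ioc (0:ℝ) (2*Real.pi), Complex.exp (-(k*s)*Complex.I) = 0 := by
  rw [← intervalIntegral.integral_of_le (by positivity)]
  have h1 : ∀ s:ℝ, Complex.exp (-(k*s)*Complex.I) = Complex.exp ((-(k:ℂ)*Complex.I)*s) := by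
    intro s; ring_nf
  simp_rw [h1]
  rw [integral_exp_mul_complex (by simp [Complex.ext_iff, hk])]
  have h2 : Complex.exp (-(k:ℂ)*Complex.I*(2*Real.pi)) = 1 := by
    rw [show -(k:ℂ)*Complex.I*(2*Real.pi) = ((-k : ℤ):ℂ)*(2*Real.pi*Complex.I) by push_cast; ring]
    exact Complex.exp_int_mul_two_pi_mul_I (-k)
  push_cast
  rw [h2]; simp

private lemma diag_null :
    (volume : Measure (ℝ×ℝ))
      {p | Complex.exp (p.1*Complex.I) = Complex.exp (p.2*Complex.I)} = 0 := by
  have hm : MeasurableSet {p : ℝ×ℝ | Complex.exp (p.1*Complex.I) = Complex.exp (p.2*Complex.I)} :=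
    (isClosed_eq (by continuity) (by continuity)).measurableSet
  rw [Measure.volume_eq_prod, Measure.measure_prod_null hm]
  refine Filter.Eventually.of_forall (fun s => ?_)
  have hsub : (Prod.mk s ⁻¹' {p : ℝ×ℝ | Complex.exp (p.1*Complex.I) = Complex.exp (p.2*Complex.I)})
      ⊆ Set.range (fun n : ℤ => s + n*(2*Real.pi)) := by
    intro t ht
    simp only [Set.mem_preimage, Set.mem_setOf_eq] at ht
    rw [Complex.exp_eq_exp_iff_exists_int] at ht
    obtain ⟨n, hn⟩ := ht
    refine ⟨-n, ?_⟩
    have : (t : ℂ) = s + (-n : ℤ) * (2*Real.pi) := by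
      have hI : ((s : ℂ) - t - n * (2*Real.pi)) * Complex.I = 0 := by
        rw [sub_mul, sub_mul, hn]; ring
      have := (mul_eq_zero.1 hI).resolve_right Complex.I_ne_zero
      push_cast
      push_cast at this
      linear_combination -this
    exact_mod_cast this.symm
  exact measure_mono_null hsub ((Set.countable_range _).measure_zero _)

private lemma mobius_log_eq (a e : ℂ) (ha : Norm.norm a < 1) (he : Norm.norm e = 1)
    (z w : ℂ) (hz : Norm.norm z = 1) (hw : Norm.norm w = 1) (hzw : z ≠ w) :
    Real.log (Norm.norm ((e * ((z - a) / (1 - (starRingEnd ℂ) a * z)) -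
        e * ((w - a) / (1 - (starRingEnd ℂ) a * w))) / (z - w))) =
      Real.log (Norm.norm (e * (1 - a * (starRingEnd ℂ) a)))
        - Real.log (Norm.norm (1 - (starRingEnd ℂ) a * z))
        - Real.log (Norm.norm (1 - (starRingEnd ℂ) a * w)) := by
  have hd : ∀ u : ℂ, Norm.norm u = 1 → 1 - (starRingEnd ℂ) a * u ≠ 0 := by
    intro u hu h
    have : (starRingEnd ℂ) a * u = 1 := by linear_combination -h
    have h2 := congrArg Norm.norm this
    simp [map_mul, hu] at h2
    exact absurd h2 (ne_of_lt ha)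
  have he0 : e ≠ 0 := by intro h; simp [h] at he
  have hnum : e * (1 - a * (starRingEnd ℂ) a) ≠ 0 := by
    refine mul_ne_zero he0 ?_
    rw [Complex.mul_conj]
    intro h
    have h1 : ((1 - Complex.normSq a : ℝ) : ℂ) = 0 := by push_cast; linear_combination h
    rw [Complex.ofReal_eq_zero, sub_eq_zero] at h1
    have : Complex.normSq a < 1 := by
      have := Complex.sq_norm a
      nlinarith [norm_nonneg a]
    simp_all
  have hratio : (e * ((z - a) / (1 - (starRingEnd ℂ) a * z)) -
        e * ((w - a) / (1 - (starRingEnd ℂ) a * w))) / (z - w) =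
      e * (1 - a * (starRingEnd ℂ) a) /
        ((1 - (starRingEnd ℂ) a * z) * (1 - (starRingEnd ℂ) a * w)) := by
    rw [mul_div_assoc', mul_div_assoc', div_sub_div _ _ (hd z hz) (hd w hw), div_div,
      div_eq_div_iff (mul_ne_zero (mul_ne_zero (hd z hz) (hd w hw)) (sub_ne_zero.2 hzw))
        (mul_ne_zero (hd z hz) (hd w hw))]
    ring
  rw [hratio, norm_div,
    Real.log_div (norm_ne_zero_iff.mpr hnum)
      (norm_ne_zero_iff.mpr (mul_ne_zero (hd z hz) (hd w hw))),
    show Norm.norm ((1 - (starRingEnd ℂ) a * z) * (1 - (starRingEnd ℂ) a * w)) =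
      Norm.norm (1 - (starRingEnd ℂ) a * z) * Norm.norm (1 - (starRingEnd ℂ) a * w) from
      norm_mul _ _,
    Real.log_mul (norm_ne_zero_iff.mpr (hd z hz)) (norm_ne_zero_iff.mpr (hd w hw)), sub_sub]

set_option maxHeartbeats 1000000 in
/-- for a Möbius transformation `μ(z) = e (z-a)/(1 - ā z)` preserving the unit
circle, all welding Grunsky coefficients `λ̂_{k,ℓ}` with `k, ℓ ≠ 0` vanish, i.e. the
welding Grunsky matrix `Λ_μ` is zero. -/
theorem mobius_grunsky_coefficients_vanish (a e : ℂ) (ha : Norm.norm a < 1)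
    (he : Norm.norm e = 1)
    (μ : ℂ → ℂ) (hμ : ∀ z, μ z = e * ((z - a) / (1 - (starRingEnd ℂ) a * z)))
    (k ℓ : ℤ) (hk : k ≠ 0) (hl : ℓ ≠ 0) :
    (1 / (2 * Real.pi) ^ 2 : ℂ) *
      ∫ p in (Set.Ioc (0:ℝ) (2 * Real.pi)) ×ˢ (Set.Ioc (0:ℝ) (2 * Real.pi)),
        ((Real.log (Norm.norm
            ((μ (Complex.exp (p.1 * Complex.I)) - μ (Complex.exp (p.2 * Complex.I))) /
              (Complex.exp (p.1 * Complex.I) - Complex.exp (p.2 * Complex.I)))) : ℝ) : ℂ) *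
          Complex.exp (-(k * p.1 + ℓ * p.2) * Complex.I) = 0 := by
  set S := Set.Ioc (0:ℝ) (2 * Real.pi) with hS
  set c : ℝ := Real.log (Norm.norm (e * (1 - a * (starRingEnd ℂ) a))) with hc
  set h : ℝ → ℝ := fun s =>
    Real.log (Norm.norm (1 - (starRingEnd ℂ) a * Complex.exp (s * Complex.I))) with hh
  set E1 : ℝ → ℂ := fun s => Complex.exp (-(k*s)*Complex.I) with hE1
  set E2 : ℝ → ℂ := fun t => Complex.exp (-(ℓ*t)*Complex.I) with hE2
  set G : ℝ×ℝ → ℂ := fun p => ((c : ℂ) - (h p.1 : ℝ) - (h p.2 : ℝ)) * (E1 p.1 * E2 p.2) with hG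
  -- a.e. equality of the integrand with G
  have hae : ∀ᵐ p ∂((volume : Measure (ℝ×ℝ)).restrict (S ×ˢ S)),
      ((Real.log (Norm.norm
            ((μ (Complex.exp (p.1 * Complex.I)) - μ (Complex.exp (p.2 * Complex.I))) /
              (Complex.exp (p.1 * Complex.I) - Complex.exp (p.2 * Complex.I)))) : ℝ) : ℂ) *
          Complex.exp (-(k * p.1 + ℓ * p.2) * Complex.I) = G p := by
    apply ae_restrict_of_ae
    rw [ae_iff]
    refine measure_mono_null (fun p hp => ?_) diag_null
    simp only [Set.mem_setOf_eq] at hp ⊢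
    by_contra hne
    apply hp
    have hzw : Complex.exp (p.1 * Complex.I) ≠ Complex.exp (p.2 * Complex.I) := hne
    rw [hμ, hμ, mobius_log_eq a e ha he _ _ (Complex.norm_exp_ofReal_mul_I p.1)
      (Complex.norm_exp_ofReal_mul_I p.2) hzw]
    have hEE : Complex.exp (-(k * p.1 + ℓ * p.2) * Complex.I) = E1 p.1 * E2 p.2 := by
      rw [hE1, hE2, ← Complex.exp_add]; ring_nf
    rw [hEE, hG]
    push_cast
    ring
  rw [integral_congr_ae hae]
  -- switch to product of restricted measures
  have hmeas : ((volume : Measure ℝ).restrict S).prod ((volume : Measure ℝ).restrict S)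
      = (volume : Measure (ℝ×ℝ)).restrict (S ×ˢ S) := by
    rw [Measure.prod_restrict, ← Measure.volume_eq_prod]
  rw [← hmeas]
  -- integrability facts
  have hdne : ∀ s : ℝ, (1 - (starRingEnd ℂ) a * Complex.exp (s * Complex.I)) ≠ 0 := by
    intro s hz
    have : (starRingEnd ℂ) a * Complex.exp (s * Complex.I) = 1 := by linear_combination -hz
    have h2 := congrArg Norm.norm this
    simp [norm_mul, Complex.norm_exp_ofReal_mul_I] at h2
    exact absurd h2 (ne_of_lt ha)
  have hgc : Continuous fun s : ℝ => (1 - (starRingEnd ℂ) a * Complex.exp (s * Complex.I)) :=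
    continuous_const.sub (continuous_const.mul
      (Complex.continuous_exp.comp (Complex.continuous_ofReal.mul continuous_const)))
  have habs : Continuous fun s : ℝ =>
      Norm.norm (1 - (starRingEnd ℂ) a * Complex.exp (s * Complex.I)) :=
    continuous_norm.comp hgc
  have hhcont : Continuous h := habs.log (fun s => norm_ne_zero_iff.mpr (hdne s))
  have hE1cont : Continuous E1 :=
    Complex.continuous_exp.comp
      (((continuous_const.mul Complex.continuous_ofReal).neg).mul continuous_const)
  have hE2cont : Continuous E2 :=
    Complex.continuous_exp.comp
      (((continuous_const.mul Complex.continuous_ofReal).neg).mul continuous_const)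
  have hfin : ∀ f : ℝ → ℂ, Continuous f → Integrable f ((volume : Measure ℝ).restrict S) := by
    intro f hf
    exact (hf.integrableOn_Ioc (a := 0) (b := 2*Real.pi))
  have hIE1 : Integrable E1 ((volume : Measure ℝ).restrict S) := hfin _ hE1cont
  have hIE2 : Integrable E2 ((volume : Measure ℝ).restrict S) := hfin _ hE2cont
  have hIcE1 : Integrable (fun s => (c:ℂ) * E1 s) ((volume : Measure ℝ).restrict S) :=
    hIE1.const_mul _
  have hIhE1 : Integrable (fun s => ((h s : ℝ):ℂ) * E1 s) ((volume : Measure ℝ).restrict S) :=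
    hfin _ ((Complex.continuous_ofReal.comp hhcont).mul hE1cont)
  have hIhE2 : Integrable (fun t => ((h t : ℝ):ℂ) * E2 t) ((volume : Measure ℝ).restrict S) :=
    hfin _ ((Complex.continuous_ofReal.comp hhcont).mul hE2cont)
  -- expand G and compute
  have hGfun : G = fun p : ℝ×ℝ =>
      ((c:ℂ) * E1 p.1 * E2 p.2 - ((h p.1 : ℝ):ℂ) * E1 p.1 * E2 p.2)
        - E1 p.1 * (((h p.2 : ℝ):ℂ) * E2 p.2) := by
    funext p; rw [hG]; push_cast; ring
  have h1 : ∫ p : ℝ×ℝ, (((c:ℂ) * E1 p.1 * E2 p.2 - ((h p.1 : ℝ):ℂ) * E1 p.1 * E2 p.2)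
        - E1 p.1 * (((h p.2 : ℝ):ℂ) * E2 p.2))
        ∂(((volume : Measure ℝ).restrict S).prod ((volume : Measure ℝ).restrict S))
      = (∫ p : ℝ×ℝ, ((c:ℂ) * E1 p.1 * E2 p.2 - ((h p.1 : ℝ):ℂ) * E1 p.1 * E2 p.2)
          ∂(((volume : Measure ℝ).restrict S).prod ((volume : Measure ℝ).restrict S)))
        - ∫ p : ℝ×ℝ, E1 p.1 * (((h p.2 : ℝ):ℂ) * E2 p.2)
          ∂(((volume : Measure ℝ).restrict S).prod ((volume : Measure ℝ).restrict S)) :=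
    integral_sub ((hIcE1.mul_prod hIE2).sub (hIhE1.mul_prod hIE2)) (hIE1.mul_prod hIhE2)
  have h2 : ∫ p : ℝ×ℝ, ((c:ℂ) * E1 p.1 * E2 p.2 - ((h p.1 : ℝ):ℂ) * E1 p.1 * E2 p.2)
        ∂(((volume : Measure ℝ).restrict S).prod ((volume : Measure ℝ).restrict S))
      = (∫ p : ℝ×ℝ, (c:ℂ) * E1 p.1 * E2 p.2
          ∂(((volume : Measure ℝ).restrict S).prod ((volume : Measure ℝ).restrict S)))
        - ∫ p : ℝ×ℝ, ((h p.1 : ℝ):ℂ) * E1 p.1 * E2 p.2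
          ∂(((volume : Measure ℝ).restrict S).prod ((volume : Measure ℝ).restrict S)) :=
    integral_sub (hIcE1.mul_prod hIE2) (hIhE1.mul_prod hIE2)
  have h3 : ∫ p : ℝ×ℝ, (c:ℂ) * E1 p.1 * E2 p.2
        ∂(((volume : Measure ℝ).restrict S).prod ((volume : Measure ℝ).restrict S))
      = (∫ s, (c:ℂ) * E1 s ∂((volume : Measure ℝ).restrict S))
        * ∫ t, E2 t ∂((volume : Measure ℝ).restrict S) :=
    integral_prod_mul (fun s => (c:ℂ) * E1 s) E2
  have h4 : ∫ p : ℝ×ℝ, ((h p.1 : ℝ):ℂ) * E1 p.1 * E2 p.2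
        ∂(((volume : Measure ℝ).restrict S).prod ((volume : Measure ℝ).restrict S))
      = (∫ s, ((h s : ℝ):ℂ) * E1 s ∂((volume : Measure ℝ).restrict S))
        * ∫ t, E2 t ∂((volume : Measure ℝ).restrict S) :=
    integral_prod_mul (fun s => ((h s : ℝ):ℂ) * E1 s) E2
  have h5 : ∫ p : ℝ×ℝ, E1 p.1 * (((h p.2 : ℝ):ℂ) * E2 p.2)
        ∂(((volume : Measure ℝ).restrict S).prod ((volume : Measure ℝ).restrict S))
      = (∫ s, E1 s ∂((volume : Measure ℝ).restrict S))
        * ∫ t, ((h t : ℝ):ℂ) * E2 t ∂((volume : Measure ℝ).restrict S) :=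
    integral_prod_mul E1 (fun t => ((h t : ℝ):ℂ) * E2 t)
  have z1 : (∫ s, E1 s ∂((volume : Measure ℝ).restrict S)) = 0 := exp_int_integral_zero k hk
  have z2 : (∫ t, E2 t ∂((volume : Measure ℝ).restrict S)) = 0 := exp_int_integral_zero ℓ hl
  rw [hGfun, h1, h2, h3, h4, h5, z1, z2]
  ring
end

section
/- Let D be a Hilbert–Schmidt diagonal operator with entries δ_k ∈ [0, c], c < 1, and let Λ be a self-adjoint Hilbert–Schmidt operator whose nonzero eigenvalues are exactly the values (1 − (1±δ_k)^{−1}) (i.e., I − Λ is unitarily equivalent to diag((I−D)^{−1}, (I+D)^{−1})). Then the regularized Fredholm determinant satisfies det₂((I − Λ)^{−1}) = det(I − D²) = ∏_k (1 − δ_k²). -/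
/-- A positive function whose logarithms are summable is multipliable. -/
lemma multipliable_of_summable_log' (f : ℕ → ℝ) (hf : ∀ n, 0 < f n)
    (h : Summable fun n => Real.log (f n)) : Multipliable f :=
  ⟨Real.exp (∑' n, Real.log (f n)),
    (h.hasSum.rexp).congr_fun fun n => (Real.exp_log (hf n)).symm⟩

/-- The regularized Fredholm determinant `det₂(I + T) = ∏ (1 + t_i) e^{-t_i}` of a
Hilbert–Schmidt operator `T`, expressed through its sequence of eigenvalues `t`. -/
noncomputable def det2OfEigenvalues {ι : Type*} (t : ι → ℝ) : ℝ :=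
  ∏' i, (1 + t i) * Real.exp (-t i)

/-- if `D` is a Hilbert–Schmidt diagonal operator with entries
`δ_k ∈ [0, c]`, `c < 1`, and `Λ` is a self-adjoint Hilbert–Schmidt operator with
`I - Λ` unitarily equivalent to `diag((I-D)⁻¹, (I+D)⁻¹)` — so that
`(I-Λ)⁻¹ = I + T` where `T = Λ(I-Λ)⁻¹` is Hilbert–Schmidt with eigenvalues `±δ_k` — then
`det₂((I-Λ)⁻¹) = det(I - D²) = ∏_k (1 - δ_k²)`. -/
theorem det2_of_one_sub_grunsky_inverse (c : ℝ) (hc : c < 1) (δ : ℕ → ℝ)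
    (hδ : ∀ k, 0 ≤ δ k ∧ δ k ≤ c) (hHS : Summable fun k => δ k ^ 2) :
    det2OfEigenvalues (Sum.elim (fun k : ℕ => δ k) (fun k : ℕ => -δ k)) =
      ∏' k : ℕ, (1 - δ k ^ 2) := by
  have hc0 : (0:ℝ) ≤ c := le_trans (hδ 0).1 (hδ 0).2
  have hlt : ∀ k, δ k < 1 := fun k => lt_of_le_of_lt (hδ k).2 hc
  have hbound : Summable fun k => δ k ^ 2 / (1 - c) := hHS.div_const _
  -- summability of logs
  have key : ∀ (s : ℝ) (k : ℕ), s = 1 ∨ s = -1 →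
      |Real.log ((1 + s * δ k) * Real.exp (-(s * δ k)))| ≤ δ k ^ 2 / (1 - c) := by
    intro s k hs
    have hδk := hδ k
    have hpos : 0 < 1 + s * δ k := by
      rcases hs with h | h <;> subst h <;> nlinarith [hlt k, hδk.1]
    rw [Real.log_mul (ne_of_gt hpos) (Real.exp_ne_zero _), Real.log_exp]
    have habs : |(-(s * δ k))| = δ k := by
      rcases hs with h | h <;> subst h <;> simp [abs_of_nonneg hδk.1]
    have hx : |(-(s * δ k))| < 1 := by rw [habs]; exact hlt k
    have h1 := Real.abs_log_sub_add_sum_range_le hx 1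
    rw [habs] at h1
    simp only [Finset.range_one, Finset.sum_singleton, pow_one, Nat.cast_zero,
      zero_add, div_one] at h1
    have e1 : (1:ℝ) - -(s * δ k) = 1 + s * δ k := by ring
    rw [e1, add_comm] at h1
    norm_num at h1
    refine h1.trans (div_le_div_of_nonneg_left (sq_nonneg _) (by linarith) (by linarith))
  have hsum : ∀ (s : ℝ), s = 1 ∨ s = -1 →
      Summable fun k => Real.log ((1 + s * δ k) * Real.exp (-(s * δ k))) :=
    fun s hs => Summable.of_abs
      (hbound.of_nonneg_of_le (fun k => abs_nonneg _) (fun k => key s k hs))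
  have hposf : ∀ (s : ℝ) (k : ℕ), s = 1 ∨ s = -1 →
      0 < (1 + s * δ k) * Real.exp (-(s * δ k)) := by
    intro s k hs
    have hδk := hδ k
    have : 0 < 1 + s * δ k := by
      rcases hs with h | h <;> subst h <;> nlinarith [hlt k, hδk.1]
    positivity
  have m1 : Multipliable fun k => (1 + δ k) * Real.exp (-δ k) := by
    have := multipliable_of_summable_log' _ (fun k => hposf 1 k (Or.inl rfl))
      (hsum 1 (Or.inl rfl))
    simpa using this
  have m2 : Multipliable fun k => (1 + -δ k) * Real.exp (δ k) := by
    have := multipliable_of_summable_log' _ (fun k => hposf (-1) k (Or.inr rfl))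
      (hsum (-1) (Or.inr rfl))
    simpa using this
  unfold det2OfEigenvalues
  set F : ℕ ⊕ ℕ → ℝ := fun i =>
    (1 + Sum.elim (fun k : ℕ => δ k) (fun k : ℕ => -δ k) i) *
      Real.exp (-Sum.elim (fun k : ℕ => δ k) (fun k : ℕ => -δ k) i) with hF
  calc ∏' i : ℕ ⊕ ℕ, F i
      = ∏' z : ℤ, F (Equiv.intEquivNatSumNat z) :=
        (Equiv.tprod_eq Equiv.intEquivNatSumNat F).symm
    _ = ∏' z : ℤ, Int.rec (fun k => (1 + δ k) * Real.exp (-δ k))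
          (fun k => (1 + -δ k) * Real.exp (δ k)) z := by
        refine tprod_congr fun z => ?_
        rcases z with n | n
        · rfl
        · show (1 + -δ n) * Real.exp (-(-δ n)) = (1 + -δ n) * Real.exp (δ n)
          rw [neg_neg]
    _ = (∏' k : ℕ, (1 + δ k) * Real.exp (-δ k)) *
          ∏' k : ℕ, (1 + -δ k) * Real.exp (δ k) := tprod_int_rec m1 m2
    _ = ∏' k : ℕ, ((1 + δ k) * Real.exp (-δ k) * ((1 + -δ k) * Real.exp (δ k))) :=
        (Multipliable.tprod_mul m1 m2).symm
    _ = ∏' k : ℕ, (1 - δ k ^ 2) := by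
        refine tprod_congr fun k => ?_
        rw [show (1 + δ k) * Real.exp (-δ k) * ((1 + -δ k) * Real.exp (δ k))
            = (1 + δ k) * (1 - δ k) * (Real.exp (-δ k) * Real.exp (δ k)) by ring,
          ← Real.exp_add, show -δ k + δ k = 0 by ring, Real.exp_zero]
        ring
end
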